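/- For every integer N ≥ 2, all indices 1 ≤ i ≤ N and 1 ≤ j ≤ N−1, and every smooth complex-valued function f of the variables T_{k,i}, the Gauss–Givental operators satisfy the commutation relation E_{i,i}(E_{j,j+1} f) − E_{j,j+1}(E_{i,i} f) = (δ_{i,j} − δ_{i,j+1}) · E_{j,j+1} f. -/

import Mathlib

noncomputable section

/-- Value of the variable `T_{k,i}` (1-based indices), with the convention that
`T_{k,i} = 0` whenever `(k,i)` does not satisfy `1 ≤ i ≤ k ≤ N-1`
(in particular `T_{N,i} = 0`). -/
def tv (N : ℕ) (T : (Fin N × Fin N) → ℝ) (k i : ℕ) : ℝ :=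
  if h : 1 ≤ i ∧ i ≤ k ∧ k ≤ N - 1 then T (⟨k - 1, by omega⟩, ⟨i - 1, by omega⟩) else 0

/-- Partial derivative `∂f/∂T_{k,i}` (1-based indices), with the convention that it is
zero whenever `(k,i)` does not satisfy `1 ≤ i ≤ k ≤ N-1`. -/
def pd (N : ℕ) (f : ((Fin N × Fin N) → ℝ) → ℂ) (k i : ℕ) (T : (Fin N × Fin N) → ℝ) : ℂ :=
  if h : 1 ≤ i ∧ i ≤ k ∧ k ≤ N - 1 then
    fderiv ℝ f T (Pi.single ((⟨k - 1, by omega⟩ : Fin N), (⟨i - 1, by omega⟩ : Fin N)) 1)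
  else 0

/-- The Gauss–Givental Cartan operator `E_{i,i}`. -/
def Ed (N : ℕ) (μ : ℕ → ℂ) (i : ℕ) (f : ((Fin N × Fin N) → ℝ) → ℂ)
    (T : (Fin N × Fin N) → ℝ) : ℂ :=
  μ i * f T + ∑ k ∈ Finset.Icc 1 (i - 1), pd N f (N + k - i) k T
    - ∑ k ∈ Finset.Icc i (N - 1), pd N f k i T

/-- The Gauss–Givental raising operator `E_{i,i+1}`. -/
def Er (N : ℕ) (i : ℕ) (f : ((Fin N × Fin N) → ℝ) → ℂ) (T : (Fin N × Fin N) → ℝ) : ℂ :=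
  ∑ n ∈ Finset.Icc 1 i,
    (∑ k ∈ Finset.Icc n i, (Real.exp (tv N T (N + k - i) k - tv N T (N + k - i - 1) k) : ℂ)) *
      (pd N f (N + n - i - 1) n T - pd N f (N + n - i - 1) (n - 1) T)

def sdir (N k i : ℕ) : (Fin N × Fin N) → ℝ :=
  if h : 1 ≤ i ∧ i ≤ k ∧ k ≤ N - 1 then
    Pi.single ((⟨k - 1, by omega⟩ : Fin N), (⟨i - 1, by omega⟩ : Fin N)) 1 else 0

lemma pd_eq_fderiv (N : ℕ) (f : ((Fin N × Fin N) → ℝ) → ℂ) (k i : ℕ)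
    (T : (Fin N × Fin N) → ℝ) : pd N f k i T = fderiv ℝ f T (sdir N k i) := by
  by_cases h : 1 ≤ i ∧ i ≤ k ∧ k ≤ N - 1
  · simp [pd, sdir, h]
  · simp [pd, sdir, h]

def lv (N k i : ℕ) : ((Fin N × Fin N) → ℝ) →L[ℝ] ℝ :=
  if h : 1 ≤ i ∧ i ≤ k ∧ k ≤ N - 1 then
    ContinuousLinearMap.proj ((⟨k - 1, by omega⟩ : Fin N), (⟨i - 1, by omega⟩ : Fin N)) else 0

lemma tv_eq_lv (N : ℕ) (T : (Fin N × Fin N) → ℝ) (k i : ℕ) : tv N T k i = lv N k i T := by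
  by_cases h : 1 ≤ i ∧ i ≤ k ∧ k ≤ N - 1
  · simp [tv, lv, h]
  · simp [tv, lv, h]

lemma lv_sdir (N k i a b : ℕ) :
    lv N k i (sdir N a b) =
      if k = a ∧ i = b ∧ 1 ≤ i ∧ i ≤ k ∧ k ≤ N - 1 then 1 else 0 := by
  by_cases h1 : 1 ≤ i ∧ i ≤ k ∧ k ≤ N - 1
  · by_cases h2 : 1 ≤ b ∧ b ≤ a ∧ a ≤ N - 1
    · simp only [lv, sdir, dif_pos h1, dif_pos h2, ContinuousLinearMap.proj_apply,
        Pi.single_apply, Prod.mk.injEq, Fin.mk.injEq]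
      split_ifs with hp hq hq <;> first | rfl | (exfalso; omega)
    · simp only [lv, sdir, dif_pos h1, dif_neg h2, map_zero]
      split_ifs with hp
      · exfalso; omega
      · rfl
  · simp only [lv, sdir, dif_neg h1, ContinuousLinearMap.zero_apply]
    split_ifs with hp
    · exfalso; omega
    · rfl
lemma sum_ind (a b c : ℕ) (P : ℕ → Prop) [DecidablePred P]
    (hP : ∀ x, P x → x = c) :
    (∑ x ∈ Finset.Icc a b, if P x then (1:ℝ) else 0)
      = if a ≤ c ∧ c ≤ b ∧ P c then 1 else 0 := by
  by_cases hc : a ≤ c ∧ c ≤ b ∧ P c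
  · rw [Finset.sum_eq_single_of_mem c (Finset.mem_Icc.mpr ⟨hc.1, hc.2.1⟩), if_pos hc.2.2,
      if_pos hc]
    intro x hx hne
    split_ifs with h
    · exact absurd (hP x h) hne
    · rfl
  · rw [Finset.sum_eq_zero, if_neg hc]
    intro x hx
    split_ifs with h
    · have hxc := hP x h
      subst hxc
      rw [Finset.mem_Icc] at hx
      exact absurd ⟨hx.1, hx.2, h⟩ hc
    · rfl

def vv (N i : ℕ) : (Fin N × Fin N) → ℝ :=
  (∑ k ∈ Finset.Icc 1 (i - 1), sdir N (N + k - i) k) - ∑ k ∈ Finset.Icc i (N - 1), sdir N k i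

lemma lv_vv (N i j k : ℕ) (hN : 2 ≤ N) (hi1 : 1 ≤ i) (hi2 : i ≤ N)
    (hj1 : 1 ≤ j) (hj2 : j ≤ N - 1) (hk1 : 1 ≤ k) (hk2 : k ≤ j) :
    (lv N (N + k - j) k - lv N (N + k - j - 1) k) (vv N i)
      = (if i = j then (1:ℝ) else 0) - if i = j + 1 then 1 else 0 := by
  simp only [vv, ContinuousLinearMap.sub_apply, map_sub, map_sum, lv_sdir]
  rw [Finset.sum_sub_distrib, Finset.sum_sub_distrib]
  rw [sum_ind 1 (i-1) k _ (fun x h => h.2.1.symm),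
      sum_ind i (N-1) (N+k-j) _ (fun x h => h.1.symm),
      sum_ind 1 (i-1) k _ (fun x h => h.2.1.symm),
      sum_ind i (N-1) (N+k-j-1) _ (fun x h => h.1.symm)]
  split_ifs <;> first | (exfalso; omega) | norm_num

lemma Ed_eq (N : ℕ) (μ : ℕ → ℂ) (i : ℕ) (f : ((Fin N × Fin N) → ℝ) → ℂ)
    (T : (Fin N × Fin N) → ℝ) :
    Ed N μ i f T = μ i * f T + fderiv ℝ f T (vv N i) := by
  simp only [Ed, pd_eq_fderiv, vv, map_sub, map_sum]
  ring

def ww (N j n : ℕ) : (Fin N × Fin N) → ℝ :=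
  sdir N (N + n - j - 1) n - sdir N (N + n - j - 1) (n - 1)

def cf (N j n : ℕ) (T : (Fin N × Fin N) → ℝ) : ℂ :=
  ∑ k ∈ Finset.Icc n j, (Real.exp (tv N T (N + k - j) k - tv N T (N + k - j - 1) k) : ℂ)

lemma Er_eq (N j : ℕ) (f : ((Fin N × Fin N) → ℝ) → ℂ) (T : (Fin N × Fin N) → ℝ) :
    Er N j f T = ∑ n ∈ Finset.Icc 1 j, cf N j n T * fderiv ℝ f T (ww N j n) := by
  simp only [Er, cf, ww, pd_eq_fderiv, map_sub]

def cfd (N j n : ℕ) (T : (Fin N × Fin N) → ℝ) : ((Fin N × Fin N) → ℝ) →L[ℝ] ℂ :=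
  ∑ k ∈ Finset.Icc n j,
    Real.exp (tv N T (N + k - j) k - tv N T (N + k - j - 1) k) •
      (Complex.ofRealCLM.comp (lv N (N + k - j) k - lv N (N + k - j - 1) k))

lemma hasFDerivAt_cf (N j n : ℕ) (T : (Fin N × Fin N) → ℝ) :
    HasFDerivAt (cf N j n) (cfd N j n T) T := by
  unfold cf cfd
  apply HasFDerivAt.fun_sum
  intro k _
  have h1 : HasFDerivAt
      (fun S => Real.exp (tv N S (N + k - j) k - tv N S (N + k - j - 1) k))
      (Real.exp (tv N T (N + k - j) k - tv N T (N + k - j - 1) k) •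
        (lv N (N + k - j) k - lv N (N + k - j - 1) k)) T := by
    have h0 : HasFDerivAt (fun S => (lv N (N + k - j) k - lv N (N + k - j - 1) k) S)
        (lv N (N + k - j) k - lv N (N + k - j - 1) k) T :=
      (lv N (N + k - j) k - lv N (N + k - j - 1) k).hasFDerivAt
    have := h0.exp
    simpa [tv_eq_lv, ContinuousLinearMap.sub_apply] using this
  have h2 := Complex.ofRealCLM.hasFDerivAt.comp T h1
  convert h2 using 1
  ext z
  simp
  rw [ContinuousLinearMap.comp_smul]

/-- the commutation relation
`[E_{i,i}, E_{j,j+1}] = (δ_{i,j} − δ_{i,j+1}) E_{j,j+1}` for the Gauss–Givental operators. -/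
theorem commutator_diag_raise (N : ℕ) (hN : 2 ≤ N) (μ : ℕ → ℂ)
    (f : ((Fin N × Fin N) → ℝ) → ℂ) (hf : ContDiff ℝ (⊤ : ℕ∞) f)
    (i j : ℕ) (hi1 : 1 ≤ i) (hi2 : i ≤ N) (hj1 : 1 ≤ j) (hj2 : j ≤ N - 1)
    (T : (Fin N × Fin N) → ℝ) :
    Ed N μ i (fun S => Er N j f S) T - Er N j (fun S => Ed N μ i f S) T
      = (((if i = j then 1 else 0) : ℂ) - (if i = j + 1 then 1 else 0)) * Er N j f T := by
  have hdf : Differentiable ℝ f := hf.differentiable (by simp)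
  have hdf' : Differentiable ℝ (fderiv ℝ f) :=
    (hf.fderiv_right (m := (⊤:ℕ∞)) (by exact_mod_cast le_refl ((⊤:ℕ∞):WithTop ℕ∞))).differentiable (by simp)
  set f'' := fderiv ℝ (fderiv ℝ f) T with hf''def
  have hsymm : ∀ v w, f'' v w = f'' w v :=
    second_derivative_symmetric (fun y => (hdf y).hasFDerivAt) (hdf' T).hasFDerivAt
  have hw : ∀ w : (Fin N × Fin N) → ℝ, HasFDerivAt (fun S => fderiv ℝ f S w)
      ((ContinuousLinearMap.apply ℝ ℂ w).comp f'') T :=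
    fun w => (ContinuousLinearMap.apply ℝ ℂ w).hasFDerivAt.comp T (hdf' T).hasFDerivAt
  have hEd : HasFDerivAt (fun S => Ed N μ i f S)
      (μ i • fderiv ℝ f T + (ContinuousLinearMap.apply ℝ ℂ (vv N i)).comp f'') T := by
    have heq : (fun S => Ed N μ i f S) = fun S => μ i * f S + fderiv ℝ f S (vv N i) :=
      funext fun S => Ed_eq N μ i f S
    rw [heq]
    exact ((hdf T).hasFDerivAt.const_mul (μ i)).add (hw (vv N i))
  have hEr : HasFDerivAt (fun S => Er N j f S)
      (∑ n ∈ Finset.Icc 1 j,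
        (cf N j n T • ((ContinuousLinearMap.apply ℝ ℂ (ww N j n)).comp f'')
          + fderiv ℝ f T (ww N j n) • cfd N j n T)) T := by
    have heq : (fun S => Er N j f S)
        = fun S => ∑ n ∈ Finset.Icc 1 j, cf N j n S * fderiv ℝ f S (ww N j n) :=
      funext fun S => Er_eq N j f S
    rw [heq]
    exact HasFDerivAt.fun_sum fun n _ => (hasFDerivAt_cf N j n T).mul (hw (ww N j n))
  have hcv : ∀ n ∈ Finset.Icc 1 j, cfd N j n T (vv N i)
      = (((if i = j then 1 else 0) : ℂ) - if i = j + 1 then 1 else 0) * cf N j n T := by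
    intro n hn
    rw [Finset.mem_Icc] at hn
    unfold cfd cf
    rw [ContinuousLinearMap.sum_apply, Finset.mul_sum]
    refine Finset.sum_congr rfl fun k hk => ?_
    rw [Finset.mem_Icc] at hk
    rw [ContinuousLinearMap.smul_apply, ContinuousLinearMap.comp_apply,
      lv_vv N i j k hN hi1 hi2 hj1 hj2 (le_trans hn.1 hk.1) hk.2]
    rw [Complex.ofRealCLM_apply]
    push_cast [apply_ite Complex.ofReal]
    rw [Complex.real_smul]
    push_cast
    ring
  have hval1 : Ed N μ i (fun S => Er N j f S) T
      = μ i * Er N j f T + (∑ n ∈ Finset.Icc 1 j,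
        (cf N j n T • ((ContinuousLinearMap.apply ℝ ℂ (ww N j n)).comp f'')
          + fderiv ℝ f T (ww N j n) • cfd N j n T)) (vv N i) := by
    rw [Ed_eq, hEr.fderiv]
  have hval2 : Er N j (fun S => Ed N μ i f S) T
      = ∑ n ∈ Finset.Icc 1 j, cf N j n T *
          ((μ i • fderiv ℝ f T + (ContinuousLinearMap.apply ℝ ℂ (vv N i)).comp f'') (ww N j n)) := by
    rw [Er_eq, hEd.fderiv]
  rw [hval1, hval2, Er_eq N j f]
  simp only [ContinuousLinearMap.sum_apply, ContinuousLinearMap.add_apply,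
    ContinuousLinearMap.smul_apply, ContinuousLinearMap.comp_apply,
    ContinuousLinearMap.apply_apply, smul_eq_mul]
  rw [Finset.mul_sum, Finset.mul_sum, ← Finset.sum_add_distrib, ← Finset.sum_sub_distrib]
  refine Finset.sum_congr rfl fun n hn => ?_
  rw [hcv n hn, hsymm (vv N i) (ww N j n)]
  ring
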